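/- For every positive integer l there exist sets C and D of nonnegative integers such that C ∪ D = ℕ, C ∩ D = (2^{2l} − 1) + (2^{2l+1} − 1)ℕ, and R_C(n) = R_D(n) for every positive integer n. -/

import Mathlib

/-- `R S n` is the number of unordered representations of `n` as `s + s'`
with `s, s' ∈ S` and `s < s'`. -/
noncomputable def R (S : Set ℕ) (n : ℕ) : ℕ :=
  {p : ℕ × ℕ | p.1 ∈ S ∧ p.2 ∈ S ∧ p.1 < p.2 ∧ p.1 + p.2 = n}.ncard

/-- The Thue–Morse set: nonnegative integers with an even number of
`1` digits in binary. -/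
def A : Set ℕ := {n | Even ((Nat.digits 2 n).sum)}

/-- The complement of the Thue–Morse set. -/
def B : Set ℕ := Aᶜ

def eps (n : ℕ) : ℤ := if Even ((Nat.digits 2 n).sum) then 1 else -1

lemma eps_zero : eps 0 = 1 := by simp [eps]
lemma eps_one : eps 1 = -1 := by simp [eps]

lemma eps_two_mul (k : ℕ) : eps (2 * k) = eps k := by
  rcases Nat.eq_zero_or_pos k with h | h
  · simp [h]
  · rw [eps, Nat.digits_def' (by norm_num : 1 < 2) (by omega), Nat.mul_mod_right,
      Nat.mul_div_cancel_left _ (by norm_num : 0 < 2)]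
    simp [eps]

lemma eps_eq_mod (n : ℕ) : eps n = if (Nat.digits 2 n).sum % 2 = 0 then 1 else -1 := by
  rw [eps]
  rcases Nat.even_or_odd ((Nat.digits 2 n).sum) with h | h
  · rw [if_pos h, if_pos (Nat.even_iff.mp h)]
  · rw [Nat.odd_iff] at h
    rw [if_neg (by rw [Nat.even_iff]; omega), if_neg (by omega)]

lemma eps_two_mul_add_one (k : ℕ) : eps (2 * k + 1) = -eps k := by
  rw [eps_eq_mod, eps_eq_mod, Nat.digits_def' (by norm_num : 1 < 2) (by omega)]
  have h1 : (2 * k + 1) % 2 = 1 := by omega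
  have h2 : (2 * k + 1) / 2 = k := by omega
  rw [h1, h2, List.sum_cons]
  split_ifs with ha hb hb <;> omega

lemma eps_mul_self (n : ℕ) : eps n * eps n = 1 := by
  rw [eps]; split_ifs <;> norm_num

lemma eps_ne_zero (n : ℕ) : eps n ≠ 0 := by
  rw [eps]; split_ifs <;> norm_num

lemma eps_vals (n : ℕ) : eps n = 1 ∨ eps n = -1 := by
  rw [eps]; split_ifs <;> simp

lemma eps_pow_add {i a : ℕ} (h : a < 2 ^ i) : eps (2 ^ i + a) = -eps a := by
  induction i generalizing a with
  | zero =>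
    interval_cases a
    simp [eps_one, eps_zero]
  | succ i ih =>
    rcases Nat.even_or_odd a with ⟨b, hb⟩ | ⟨b, hb⟩
    · have e : 2 ^ (i+1) + a = 2 * (2 ^ i + b) := by rw [hb]; ring
      rw [e, eps_two_mul, ih (by omega), hb, ← two_mul, eps_two_mul]
    · have e : 2 ^ (i+1) + a = 2 * (2 ^ i + b) + 1 := by rw [hb]; ring
      rw [e, eps_two_mul_add_one, ih (by omega), hb, eps_two_mul_add_one]

lemma eps_two_pow (k : ℕ) : eps (2 ^ k) = -1 := by
  have := eps_pow_add (i := k) (a := 0) (by positivity)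
  simpa [eps_zero] using this

lemma eps_two_pow_sub_one (k : ℕ) : eps (2 ^ k - 1) = (-1) ^ k := by
  induction k with
  | zero => simpa using eps_zero
  | succ k ih =>
    have e : 2 ^ (k+1) - 1 = 2 * (2 ^ k - 1) + 1 := by
      have : 1 ≤ 2 ^ k := Nat.one_le_two_pow
      omega
    rw [e, eps_two_mul_add_one, ih]
    ring

def F (N : ℕ) : ℤ := ∑ q ∈ Finset.range N, eps q

lemma F_zero : F 0 = 0 := by simp [F]

lemma F_succ (N : ℕ) : F (N + 1) = F N + eps N := Finset.sum_range_succ _ _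

lemma F_closed (N : ℕ) : F N = if N % 2 = 1 then eps (N - 1) else 0 := by
  induction N with
  | zero => simp [F_zero]
  | succ N ih =>
    rw [F_succ, ih]
    rcases Nat.even_or_odd N with ⟨b, hb⟩ | ⟨b, hb⟩
    · rw [if_neg (by omega), if_pos (by omega)]
      simp
    · rw [if_pos (by omega), if_neg (by omega)]
      have h1 : N - 1 = 2 * b := by omega
      have h2 : N = 2 * b + 1 := by omega
      rw [h1, h2, eps_two_mul, eps_two_mul_add_one]
      ring

/-! ### The construction -/

def rl (l : ℕ) : ℕ := 2 ^ (2 * l) - 1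
def ml (l : ℕ) : ℕ := 2 ^ (2 * l + 1) - 1

def eps0 (l s : ℕ) : ℤ := if s = rl l then 0 else if s < rl l then eps s else eps (s + 1)

def gf (l n : ℕ) : ℤ := eps (n / ml l) * eps0 l (n % ml l)

def hf (l j : ℕ) : ℤ := 1 + (if j % ml l = rl l then 1 else 0)

lemma rl_eq (l : ℕ) : rl l = 2 ^ (2 * l) - 1 := rfl

lemma two_pow_two_mul (l : ℕ) (hl : 0 < l) : 2 ^ (2 * l) = 2 * 2 ^ (2 * l - 1) := by
  rw [← pow_succ']
  congr 1
  omega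

lemma rl_big (l : ℕ) (hl : 0 < l) : 3 ≤ rl l := by
  have h4 : 2 ^ 2 ≤ 2 ^ (2 * l) := Nat.pow_le_pow_right (by norm_num) (by omega)
  rw [rl_eq]; omega

lemma rl_odd (l : ℕ) (hl : 0 < l) : rl l % 2 = 1 := by
  have := two_pow_two_mul l hl
  have h1 : 1 ≤ 2 ^ (2 * l) := Nat.one_le_two_pow
  rw [rl_eq]; omega

lemma ml_eq (l : ℕ) : ml l = 2 * rl l + 1 := by
  have h : 2 ^ (2 * l + 1) = 2 * 2 ^ (2 * l) := by rw [← pow_succ']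
  have h1 : 1 ≤ 2 ^ (2 * l) := Nat.one_le_two_pow
  rw [ml, rl_eq]; omega

lemma ml_pos (l : ℕ) : 0 < ml l := by
  have h1 : 1 ≤ 2 ^ (2 * l) := Nat.one_le_two_pow
  rw [ml_eq]; omega

lemma rl_lt_ml (l : ℕ) : rl l < ml l := by rw [ml_eq]; omega

lemma eps_rl (l : ℕ) : eps (rl l) = 1 := by
  rw [rl_eq, eps_two_pow_sub_one, pow_mul]; norm_num

lemma eps_rl_succ (l : ℕ) : eps (rl l + 1) = -1 := by
  have h1 : 1 ≤ 2 ^ (2 * l) := Nat.one_le_two_pow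
  have : rl l + 1 = 2 ^ (2 * l) := by rw [rl_eq]; omega
  rw [this, eps_two_pow]

lemma F_ml_succ (l : ℕ) : F (ml l + 1) = 0 := by
  have h1 : 1 ≤ 2 ^ (2 * l + 1) := Nat.one_le_two_pow
  have h : ml l + 1 = 2 ^ (2 * l + 1) := by rw [ml]; omega
  rw [F_closed, if_neg]
  rw [h, Nat.pow_mod]
  simp

lemma gf_eval (l q s : ℕ) (hs : s < ml l) : gf l (ml l * q + s) = eps q * eps0 l s := by
  rw [gf, Nat.mul_add_div (ml_pos l), Nat.mul_add_mod, Nat.div_eq_of_lt hs,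
    Nat.mod_eq_of_lt hs, Nat.add_zero]

lemma eps0_vals (l s : ℕ) : eps0 l s = 0 ∨ eps0 l s = 1 ∨ eps0 l s = -1 := by
  rw [eps0]
  split_ifs with h1 h2
  · left; rfl
  · right; exact eps_vals s
  · right; exact eps_vals (s + 1)

lemma eps0_eq_zero_iff (l s : ℕ) : eps0 l s = 0 ↔ s = rl l := by
  rw [eps0]
  split_ifs with h1 h2 <;> simp [h1, eps_ne_zero]

lemma gf_vals (l n : ℕ) : gf l n = 0 ∨ gf l n = 1 ∨ gf l n = -1 := by
  rw [gf]
  rcases eps_vals (n / ml l) with h | h <;> rcases eps0_vals l (n % ml l) with h0 | h0 | h0 <;>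
    rw [h, h0] <;> norm_num

lemma gf_eq_zero_iff (l n : ℕ) : gf l n = 0 ↔ n % ml l = rl l := by
  rw [gf, mul_eq_zero, ← eps0_eq_zero_iff l (n % ml l)]
  have := eps_ne_zero (n / ml l)
  tauto

/-! ### Partial sums -/

def Gsum (l n : ℕ) : ℤ := ∑ j ∈ Finset.range (n + 1), gf l j

def sigma (l t : ℕ) : ℤ := if t < rl l then F (t + 1) else F (t + 2)

lemma sigma_zero (l : ℕ) (hl : 0 < l) : sigma l 0 = 1 := by
  rw [sigma, if_pos (by have := rl_big l hl; omega)]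
  rw [show (0:ℕ)+1 = 1 from rfl, F_closed]
  simp [eps_zero]

lemma Gsum_closed (l : ℕ) (hl : 0 < l) (n : ℕ) :
    Gsum l n = eps (n / ml l) * sigma l (n % ml l) := by
  have hr3 := rl_big l hl
  have hro := rl_odd l hl
  have hme := ml_eq l
  induction n with
  | zero =>
    rw [Gsum, Finset.sum_range_one]
    have h0 : gf l 0 = 1 := by
      rw [gf, Nat.zero_div, Nat.zero_mod, eps_zero, one_mul, eps0, if_neg (by omega),
        if_pos (by omega), eps_zero]
    rw [h0, Nat.zero_div, Nat.zero_mod, eps_zero, sigma_zero l hl]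
    norm_num
  | succ n ih =>
    have hGs : Gsum l (n + 1) = Gsum l n + gf l (n + 1) := Finset.sum_range_succ _ _
    set q := n / ml l with hq
    set t := n % ml l with ht
    have hdm : ml l * q + t = n := Nat.div_add_mod n (ml l)
    have htm : t < ml l := Nat.mod_lt n (ml_pos l)
    rcases Nat.lt_or_ge (t + 1) (ml l) with hc | hc
    · -- same block
      have e1 : n + 1 = ml l * q + (t + 1) := by omega
      have ed : (n + 1) / ml l = q := by
        rw [e1, Nat.mul_add_div (ml_pos l), Nat.div_eq_of_lt hc, Nat.add_zero]
      have em : (n + 1) % ml l = t + 1 := by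
        rw [e1, Nat.mul_add_mod, Nat.mod_eq_of_lt hc]
      have egf : gf l (n + 1) = eps q * eps0 l (t + 1) := by
        rw [e1, gf_eval l q (t+1) hc]
      rw [hGs, ih, ed, em, egf, ← mul_add]
      congr 1
      -- sigma t + eps0 (t+1) = sigma (t+1)
      rcases Nat.lt_trichotomy (t + 1) (rl l) with h | h | h
      · have e2 : F (t + 1 + 1) = F (t + 1) + eps (t + 1) := F_succ _
        rw [sigma, if_pos (by omega), sigma, if_pos h, eps0, if_neg (by omega), if_pos h, e2]
      · have e2 : F (t + 1 + 2) = F (t + 1) + eps (t + 1) + eps (t + 1 + 1) := by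
          rw [show t + 1 + 2 = (t + 1 + 1) + 1 by ring, F_succ, F_succ]
        rw [sigma, if_pos (by omega), sigma, if_neg (by omega), eps0, if_pos h, e2, add_zero, h,
          eps_rl, eps_rl_succ]
        ring
      · have e2 : F (t + 2 + 1) = F (t + 2) + eps (t + 2) := F_succ _
        rw [sigma, if_neg (by omega), sigma, if_neg (by omega), eps0, if_neg (by omega),
          if_neg (by omega), show t + 1 + 2 = t + 2 + 1 by ring, e2, show t + 1 + 1 = t + 2 by ring]
    · -- new block : t = ml l - 1
      have htv : t = ml l - 1 := by omega
      have e1 : n + 1 = ml l * (q + 1) := by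
        have hm := ml_pos l
        rw [Nat.mul_add, Nat.mul_one]; omega
      have ed : (n + 1) / ml l = q + 1 := by rw [e1, Nat.mul_div_cancel_left _ (ml_pos l)]
      have em : (n + 1) % ml l = 0 := by rw [e1, Nat.mul_mod_right]
      have egf : gf l (n + 1) = eps (q + 1) := by
        have := gf_eval l (q + 1) 0 (ml_pos l)
        rw [Nat.add_zero] at this
        rw [e1, this, eps0, if_neg (by omega), if_pos (by omega), eps_zero, mul_one]
      rw [hGs, ih, ed, em, egf, sigma_zero l hl, mul_one]
      have hsig : sigma l t = 0 := by
        rw [sigma, if_neg (by omega), htv, show ml l - 1 + 2 = ml l + 1 by omega, F_ml_succ]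
      rw [hsig, mul_zero, zero_add]

def Tsum (l n : ℕ) : ℤ :=
  ∑ j ∈ Finset.range (n + 1), gf l j * (if (n - j) % ml l = rl l then 1 else 0)

lemma mul_sub_nat (a b c : ℕ) : a * (b - c) = a * b - a * c := by
  rw [mul_comm, tsub_mul, mul_comm, mul_comm c a]

lemma decomp_unique {m a b c d : ℕ} (h : m * a + b = m * c + d) (hb : b < m) (hd : d < m) :
    a = c ∧ b = d := by
  have h1 : a = c := by
    rcases Nat.lt_trichotomy a c with h' | h' | h'
    · have h3 := Nat.mul_le_mul_left m (show a + 1 ≤ c from h')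
      have h2 : m * (a + 1) = m * a + m := by ring
      omega
    · exact h'
    · have h3 := Nat.mul_le_mul_left m (show c + 1 ≤ a from h')
      have h2 : m * (c + 1) = m * c + m := by ring
      omega
  subst h1
  omega

lemma Tsum_closed (l : ℕ) (hl : 0 < l) (n : ℕ) :
    Tsum l n = if rl l ≤ n % ml l then eps0 l (n % ml l - rl l) * F (n / ml l + 1)
      else eps0 l (n % ml l + ml l - rl l) * F (n / ml l) := by
  classical
  have hr3 := rl_big l hl
  have hme := ml_eq l
  have hmp := ml_pos l
  obtain ⟨q, t, hdm, htm⟩ : ∃ q t, ml l * q + t = n ∧ t < ml l :=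
    ⟨n / ml l, n % ml l, Nat.div_add_mod n _, Nat.mod_lt n hmp⟩
  have hqe : n / ml l = q := by
    rw [← hdm, Nat.mul_add_div hmp, Nat.div_eq_of_lt htm, add_zero]
  have hte : n % ml l = t := by
    rw [← hdm, Nat.mul_add_mod, Nat.mod_eq_of_lt htm]
  rw [hqe, hte]
  have step1 : Tsum l n
      = ∑ j ∈ (Finset.range (n+1)).filter (fun j => (n - j) % ml l = rl l), gf l j := by
    rw [Finset.sum_filter]
    apply Finset.sum_congr rfl
    intro j _
    split_ifs <;> ring
  rcases Nat.lt_or_ge n (rl l) with hn | hn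
  · -- n < r : empty sum, and q = 0
    have hq0 : q = 0 := by
      rcases Nat.eq_zero_or_pos q with h | h
      · exact h
      · have h3 := Nat.mul_le_mul_left (ml l) h
        rw [Nat.mul_one] at h3
        omega
    have hfe : (Finset.range (n+1)).filter (fun j => (n - j) % ml l = rl l) = ∅ := by
      rw [Finset.filter_eq_empty_iff]
      intro j hj
      rw [Nat.mod_eq_of_lt (by omega)]
      omega
    have ht0 : t = n := by rw [hq0, Nat.mul_zero] at hdm; omega
    rw [step1, hfe, Finset.sum_empty, if_neg (by omega), hq0, F_zero, mul_zero]
  · obtain ⟨K', u, hdm2, hum⟩ : ∃ K' u, ml l * K' + u = n - rl l ∧ u < ml l :=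
      ⟨(n - rl l) / ml l, (n - rl l) % ml l, Nat.div_add_mod _ _, Nat.mod_lt _ hmp⟩
    have himg : (Finset.range (n+1)).filter (fun j => (n - j) % ml l = rl l)
        = (Finset.range (K' + 1)).image (fun i => u + ml l * i) := by
      ext j
      simp only [Finset.mem_filter, Finset.mem_range, Finset.mem_image]
      constructor
      · rintro ⟨hj, hmod⟩
        obtain ⟨i', hsub⟩ : ∃ i', ml l * i' + rl l = n - j := by
          refine ⟨(n - j) / ml l, ?_⟩
          conv_rhs => rw [← Nat.div_add_mod (n - j) (ml l)]
          rw [hmod]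
        have hle : i' ≤ K' := by
          by_contra hgt
          push_neg at hgt
          have hgt' : K' + 1 ≤ i' := hgt
          have h1 := Nat.mul_le_mul_left (ml l) hgt'
          have h2 : ml l * (K' + 1) = ml l * K' + ml l := by ring
          omega
        obtain ⟨dd, hdd⟩ : ∃ dd, K' = i' + dd := ⟨K' - i', by omega⟩
        have hexp : ml l * (i' + dd) = ml l * i' + ml l * dd := by ring
        rw [hdd, hexp] at hdm2
        exact ⟨dd, by omega, by omega⟩
      · rintro ⟨i, hi, rfl⟩
        obtain ⟨dd, hdd⟩ : ∃ dd, K' = i + dd := ⟨K' - i, by omega⟩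
        have hexp : ml l * (i + dd) = ml l * i + ml l * dd := by ring
        rw [hdd, hexp] at hdm2
        refine ⟨by omega, ?_⟩
        have he : n - (u + ml l * i) = ml l * dd + rl l := by omega
        rw [he, Nat.mul_add_mod, Nat.mod_eq_of_lt (by omega)]
    have hsum : ∑ i ∈ Finset.range (K' + 1), gf l (u + ml l * i) = eps0 l u * F (K' + 1) := by
      rw [F, Finset.mul_sum]
      apply Finset.sum_congr rfl
      intro i _
      rw [show u + ml l * i = ml l * i + u by ring, gf_eval l i u hum]
      ring
    have hinj : ∀ x ∈ Finset.range (K' + 1), ∀ y ∈ Finset.range (K' + 1),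
        u + ml l * x = u + ml l * y → x = y := by
      intro x _ y _ hxy
      exact Nat.eq_of_mul_eq_mul_left hmp (by omega)
    rw [step1, himg, Finset.sum_image hinj, hsum]
    rcases Nat.lt_or_ge t (rl l) with htr | htr
    · -- t < r, so q ≥ 1, u = t + m - r, K' = q - 1
      have hq1 : 1 ≤ q := by
        rcases Nat.eq_zero_or_pos q with h | h
        · rw [h, Nat.mul_zero] at hdm; omega
        · exact h
      obtain ⟨q', rfl⟩ : ∃ q', q = q' + 1 := ⟨q - 1, by omega⟩
      have hexp : ml l * (q' + 1) = ml l * q' + ml l := by ring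
      have he : ml l * K' + u = ml l * q' + (t + ml l - rl l) := by
        rw [hexp] at hdm
        omega
      obtain ⟨hK, hu⟩ := decomp_unique he hum (by omega)
      rw [if_neg (by omega), hu, hK]
    · -- t ≥ r : u = t - r, K' = q
      have he : ml l * K' + u = ml l * q + (t - rl l) := by omega
      obtain ⟨hK, hu⟩ := decomp_unique he hum (by omega)
      rw [if_pos htr, hu, hK]

lemma F_even {N : ℕ} (h : N % 2 = 0) : F N = 0 := by
  rw [F_closed, if_neg (by omega)]

lemma F_odd {N : ℕ} (h : N % 2 = 1) : F N = eps (N - 1) := by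
  rw [F_closed, if_pos h]

lemma eps_shift (l : ℕ) (x : ℕ) (hx : x ≤ rl l) : eps (rl l + 1 + x) = -eps x := by
  have h1 : 1 ≤ 2 ^ (2 * l) := Nat.one_le_two_pow
  have h : rl l + 1 = 2 ^ (2 * l) := by rw [rl_eq]; omega
  rw [show rl l + 1 + x = 2 ^ (2 * l) + x by omega, eps_pow_add (by omega)]

lemma key (l : ℕ) (hl : 0 < l) (n : ℕ) :
    ∑ j ∈ Finset.range (n + 1), gf l j * hf l (n - j)
      = if Even n then gf l (n / 2) else 0 := by
  have hr3 := rl_big l hl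
  have hro := rl_odd l hl
  have hme := ml_eq l
  have hmp := ml_pos l
  have hsplit : ∑ j ∈ Finset.range (n + 1), gf l j * hf l (n - j)
      = Gsum l n + Tsum l n := by
    rw [Gsum, Tsum, ← Finset.sum_add_distrib]
    apply Finset.sum_congr rfl
    intro j _
    rw [hf]
    ring
  rw [hsplit, Gsum_closed l hl n, Tsum_closed l hl n]
  obtain ⟨q, t, hdm, htm⟩ : ∃ q t, ml l * q + t = n ∧ t < ml l :=
    ⟨n / ml l, n % ml l, Nat.div_add_mod n _, Nat.mod_lt n hmp⟩
  have hqe : n / ml l = q := by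
    rw [← hdm, Nat.mul_add_div hmp, Nat.div_eq_of_lt htm, add_zero]
  have hte : n % ml l = t := by rw [← hdm, Nat.mul_add_mod, Nat.mod_eq_of_lt htm]
  rw [hqe, hte]
  have hpar : n % 2 = (q + t) % 2 := by
    have hexp : ml l * q = 2 * (rl l * q) + q := by rw [hme]; ring
    omega
  rcases Nat.even_or_odd q with hq | hq
  · obtain ⟨a, ha⟩ : ∃ a, q = 2 * a := ⟨q / 2, by rcases hq with ⟨c, hc⟩; omega⟩
    have hFq : F q = 0 := F_even (by omega)
    have hFq1 : F (q + 1) = eps q := by rw [F_odd (by omega), Nat.add_sub_cancel]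
    have hepsq : eps q = eps a := by rw [ha, eps_two_mul]
    rcases Nat.even_or_odd t with ht | ht
    · -- Case A : q even, t even, n even
      obtain ⟨b, hb⟩ : ∃ b, t = 2 * b := ⟨t / 2, by rcases ht with ⟨c, hc⟩; omega⟩
      have hbm : b < ml l := by omega
      have hEv : Even n := Nat.even_iff.mpr (by omega)
      have hn2 : n / 2 = ml l * a + b := by
        have hexp : ml l * (2 * a) = 2 * (ml l * a) := by ring
        rw [ha, hexp] at hdm
        omega
      rcases Nat.lt_trichotomy t (rl l) with htr | htr | htr
      · -- A1 : t < r
        have hnc : ¬ rl l ≤ t := by omega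
        have hsig : sigma l t = eps b := by
          rw [sigma, if_pos htr, F_odd (by omega), Nat.add_sub_cancel, hb, eps_two_mul]
        have hT0 : eps0 l b = eps b := by
          rw [eps0, if_neg (by omega), if_pos (by omega)]
        have hgf : gf l (n / 2) = eps a * eps b := by
          rw [hn2, gf_eval l a b hbm, hT0]
        rw [hsig, if_neg hnc, if_pos hEv, hgf, hFq, hepsq]
        ring
      · omega
      · -- A2 : t > r
        have hc : rl l ≤ t := by omega
        have hsig : sigma l t = 0 := by
          rw [sigma, if_neg (by omega), F_even (by omega)]
        rcases Nat.eq_or_lt_of_le (show t ≤ 2 * rl l by omega) with h2r | h2r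
        · have hT1 : eps0 l (t - rl l) = 0 := by
            rw [show t - rl l = rl l by omega, eps0, if_pos rfl]
          have hgf : gf l (n / 2) = 0 := by
            rw [hn2, gf_eval l a b hbm, show b = rl l by omega, eps0, if_pos rfl, mul_zero]
          rw [hsig, if_pos hc, if_pos hEv, hgf, hT1]
          ring
        · have hT1 : eps0 l (t - rl l) = eps (t - rl l) := by
            rw [eps0, if_neg (by omega), if_pos (by omega)]
          have hT0 : eps0 l b = eps b := by
            rw [eps0, if_neg (by omega), if_pos (by omega)]
          have h3 : eps (t + 1) = -eps (t - rl l) := by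
            rw [show t + 1 = rl l + 1 + (t - rl l) by omega]
            exact eps_shift l _ (by omega)
          have h4 : eps (t + 1) = -eps b := by
            rw [show t + 1 = 2 * b + 1 by omega, eps_two_mul_add_one]
          have h5 : eps (t - rl l) = eps b := by linarith
          have hgf : gf l (n / 2) = eps a * eps b := by
            rw [hn2, gf_eval l a b hbm, hT0]
          rw [hsig, if_pos hc, if_pos hEv, hgf, hT1, h5, hFq1, hepsq]
          ring
    · -- Case B : q even, t odd, n odd
      obtain ⟨b, hb⟩ : ∃ b, t = 2 * b + 1 := ⟨t / 2, by rcases ht with ⟨c, hc⟩; omega⟩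
      have hOd : ¬ Even n := by rw [Nat.even_iff]; omega
      rcases Nat.lt_trichotomy t (rl l) with htr | htr | htr
      · -- B1
        have hnc : ¬ rl l ≤ t := by omega
        have hsig : sigma l t = 0 := by rw [sigma, if_pos htr, F_even (by omega)]
        rw [hsig, if_neg hnc, if_neg hOd, hFq]
        ring
      · -- B2 : t = r
        have hc : rl l ≤ t := by omega
        have hsig : sigma l t = -1 := by
          rw [sigma, if_neg (by omega), F_odd (by omega),
            show t + 2 - 1 = rl l + 1 by omega, eps_rl_succ]
        have hT1 : eps0 l (t - rl l) = 1 := by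
          rw [show t - rl l = 0 by omega, eps0, if_neg (by omega), if_pos (by omega), eps_zero]
        rw [hsig, if_pos hc, if_neg hOd, hT1, hFq1]
        ring
      · -- B3
        have hc : rl l ≤ t := by omega
        have hsig : sigma l t = eps (t + 1) := by
          rw [sigma, if_neg (by omega), F_odd (by omega), show t + 2 - 1 = t + 1 by omega]
        have hT1 : eps0 l (t - rl l) = eps (t - rl l) := by
          rw [eps0, if_neg (by omega), if_pos (by omega)]
        have h3 : eps (t + 1) = -eps (t - rl l) := by
          rw [show t + 1 = rl l + 1 + (t - rl l) by omega]
          exact eps_shift l _ (by omega)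
        rw [hsig, if_pos hc, if_neg hOd, hT1, hFq1, h3]
        ring
  · obtain ⟨a, ha⟩ : ∃ a, q = 2 * a + 1 := ⟨q / 2, by rcases hq with ⟨c, hc⟩; omega⟩
    have hFq1 : F (q + 1) = 0 := F_even (by omega)
    have hFq : F q = eps a := by
      rw [F_odd (by omega), show q - 1 = 2 * a by omega, eps_two_mul]
    have hepsq : eps q = -eps a := by rw [ha, eps_two_mul_add_one]
    rcases Nat.even_or_odd t with ht | ht
    · -- Case D : q odd, t even, n odd
      obtain ⟨b, hb⟩ : ∃ b, t = 2 * b := ⟨t / 2, by rcases ht with ⟨c, hc⟩; omega⟩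
      have hOd : ¬ Even n := by rw [Nat.even_iff]; omega
      rcases Nat.lt_trichotomy t (rl l) with htr | htr | htr
      · -- D1
        have hnc : ¬ rl l ≤ t := by omega
        have hsig : sigma l t = eps b := by
          rw [sigma, if_pos htr, F_odd (by omega), Nat.add_sub_cancel, hb, eps_two_mul]
        have harg : t + ml l - rl l = t + rl l + 1 := by omega
        have hT1 : eps0 l (t + rl l + 1) = eps (t + rl l + 1 + 1) := by
          rw [eps0, if_neg (by omega), if_neg (by omega)]
        have h3 : eps (t + rl l + 1 + 1) = -eps (t + 1) := by
          rw [show t + rl l + 1 + 1 = rl l + 1 + (t + 1) by ring]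
          exact eps_shift l _ (by omega)
        have h4 : eps (t + 1) = -eps b := by
          rw [show t + 1 = 2 * b + 1 by omega, eps_two_mul_add_one]
        rw [hsig, if_neg hnc, if_neg hOd, harg, hT1, h3, h4, hFq, hepsq]
        ring
      · omega
      · -- D3
        have hc : rl l ≤ t := by omega
        have hsig : sigma l t = 0 := by
          rw [sigma, if_neg (by omega), F_even (by omega)]
        rw [hsig, if_pos hc, if_neg hOd, hFq1]
        ring
    · -- Case C : q odd, t odd, n even
      obtain ⟨b, hb⟩ : ∃ b, t = 2 * b + 1 := ⟨t / 2, by rcases ht with ⟨c, hc⟩; omega⟩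
      have hEv : Even n := Nat.even_iff.mpr (by omega)
      have hn2 : n / 2 = ml l * a + (rl l + b + 1) := by
        have hexp : ml l * (2 * a + 1) = 2 * (ml l * a) + ml l := by ring
        rw [ha, hexp] at hdm
        omega
      have hw : rl l + b + 1 < ml l := by omega
      have hgfn2 : gf l (n / 2) = eps a * (-eps (b + 1)) := by
        have hT2 : eps0 l (rl l + b + 1) = -eps (b + 1) := by
          rw [eps0, if_neg (by omega), if_neg (by omega),
            show rl l + b + 1 + 1 = rl l + 1 + (b + 1) by ring]
          exact eps_shift l _ (by omega)
        rw [hn2, gf_eval l a _ hw, hT2]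
      rcases Nat.lt_trichotomy t (rl l) with htr | htr | htr
      · -- C1
        have hnc : ¬ rl l ≤ t := by omega
        have hsig : sigma l t = 0 := by rw [sigma, if_pos htr, F_even (by omega)]
        have harg : t + ml l - rl l = t + rl l + 1 := by omega
        have hT1 : eps0 l (t + rl l + 1) = eps (t + rl l + 1 + 1) := by
          rw [eps0, if_neg (by omega), if_neg (by omega)]
        have h3 : eps (t + rl l + 1 + 1) = -eps (t + 1) := by
          rw [show t + rl l + 1 + 1 = rl l + 1 + (t + 1) by ring]
          exact eps_shift l _ (by omega)
        have h4 : eps (t + 1) = eps (b + 1) := by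
          rw [show t + 1 = 2 * (b + 1) by omega, eps_two_mul]
        rw [hsig, if_neg hnc, if_pos hEv, hgfn2, harg, hT1, h3, h4, hFq]
        ring
      · -- C2 : t = r
        have hc : rl l ≤ t := by omega
        have hsig : sigma l t = -1 := by
          rw [sigma, if_neg (by omega), F_odd (by omega),
            show t + 2 - 1 = rl l + 1 by omega, eps_rl_succ]
        have h2p := two_pow_two_mul l hl
        have h1p : 1 ≤ 2 ^ (2 * l) := Nat.one_le_two_pow
        have hrv : rl l = 2 ^ (2 * l) - 1 := rl_eq l
        have hb1 : b + 1 = 2 ^ (2 * l - 1) := by omega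
        rw [hsig, if_pos hc, if_pos hEv, hgfn2, hb1, eps_two_pow, hFq1, hepsq]
        ring
      · -- C3
        have hc : rl l ≤ t := by omega
        have hsig : sigma l t = eps (t + 1) := by
          rw [sigma, if_neg (by omega), F_odd (by omega), show t + 2 - 1 = t + 1 by omega]
        have h4 : eps (t + 1) = eps (b + 1) := by
          rw [show t + 1 = 2 * (b + 1) by omega, eps_two_mul]
        rw [hsig, if_pos hc, if_pos hEv, hgfn2, h4, hFq1, hepsq]
        ring

/-! ### Counting -/

open Classical in
lemma R_eq_card (X : Set ℕ) [DecidablePred (· ∈ X)] (n : ℕ) :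
    R X n = ((Finset.range (n+1)).filter
      (fun j => j ∈ X ∧ (n - j) ∈ X ∧ 2*j < n)).card := by
  rw [R]
  have hset : {p : ℕ × ℕ | p.1 ∈ X ∧ p.2 ∈ X ∧ p.1 < p.2 ∧ p.1 + p.2 = n}
      = ↑(((Finset.range (n+1)).filter (fun j => j ∈ X ∧ (n - j) ∈ X ∧ 2*j < n)).image
          (fun j => (j, n - j))) := by
    ext ⟨x, y⟩
    simp only [Set.mem_setOf_eq, Finset.coe_image, Set.mem_image, Finset.mem_coe,
      Finset.mem_filter, Finset.mem_range, Prod.mk.injEq]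
    constructor
    · rintro ⟨hx, hy, hxy, hsum⟩
      refine ⟨x, ⟨by omega, hx, ?_, by omega⟩, rfl, by omega⟩
      rw [show n - x = y by omega]
      exact hy
    · rintro ⟨j, ⟨hj, hjX, hnjX, hlt⟩, rfl, rfl⟩
      exact ⟨hjX, hnjX, by omega, by omega⟩
  rw [hset, Set.ncard_coe_finset, Finset.card_image_of_injective]
  intro x y hxy
  exact congrArg Prod.fst hxy

open Classical in
lemma sum_indicator_sq (X : Set ℕ) [DecidablePred (· ∈ X)] (n : ℕ) :
    ∑ j ∈ Finset.range (n+1),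
        (if j ∈ X then (1:ℤ) else 0) * (if n - j ∈ X then (1:ℤ) else 0)
      = 2 * (R X n : ℤ) + (if Even n ∧ n/2 ∈ X then 1 else 0) := by
  classical
  set P := (Finset.range (n+1)).filter (fun j => j ∈ X ∧ (n - j) ∈ X) with hP
  set T := (Finset.range (n+1)).filter (fun j => j ∈ X ∧ (n - j) ∈ X ∧ 2*j < n) with hT
  have hLHS : ∑ j ∈ Finset.range (n+1),
      (if j ∈ X then (1:ℤ) else 0) * (if n - j ∈ X then (1:ℤ) else 0) = (P.card : ℤ) := by
    rw [hP, Finset.card_filter]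
    push_cast
    apply Finset.sum_congr rfl
    intro j _
    split_ifs with h1 h2 h3 h2 <;> simp_all
  have e1 : (Finset.filter (fun j => 2*j < n) P).card
      + (Finset.filter (fun j => ¬ 2*j < n) P).card = P.card :=
    Finset.card_filter_add_card_filter_not _
  have e2 : (Finset.filter (fun j => 2*j = n) (Finset.filter (fun j => ¬ 2*j < n) P)).card
      + (Finset.filter (fun j => ¬ 2*j = n) (Finset.filter (fun j => ¬ 2*j < n) P)).card
      = (Finset.filter (fun j => ¬ 2*j < n) P).card :=
    Finset.card_filter_add_card_filter_not _
  have eT : Finset.filter (fun j => 2*j < n) P = T := by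
    rw [hP, hT, Finset.filter_filter]
    apply Finset.filter_congr
    intro j _
    tauto
  have eU : (Finset.filter (fun j => ¬ 2*j = n) (Finset.filter (fun j => ¬ 2*j < n) P)).card
      = T.card := by
    apply Finset.card_nbij' (fun j => n - j) (fun j => n - j)
    · intro j hj
      simp only [Finset.mem_coe, Finset.mem_filter, Finset.mem_range, hP] at hj
      simp only [Finset.mem_coe, Finset.mem_filter, Finset.mem_range, hT]
      obtain ⟨⟨⟨hj1, hj2, hj3⟩, hj4⟩, hj5⟩ := hj
      refine ⟨by omega, hj3, ?_, by omega⟩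
      rw [show n - (n - j) = j by omega]
      exact hj2
    · intro j hj
      simp only [Finset.mem_coe, Finset.mem_filter, Finset.mem_range, hT] at hj
      simp only [Finset.mem_coe, Finset.mem_filter, Finset.mem_range, hP]
      obtain ⟨hj1, hj2, hj3, hj4⟩ := hj
      refine ⟨⟨⟨by omega, hj3, ?_⟩, by omega⟩, by omega⟩
      rw [show n - (n - j) = j by omega]
      exact hj2
    · intro j hj
      simp only [Finset.mem_coe, Finset.mem_filter, Finset.mem_range, hP] at hj ⊢
      omega
    · intro j hj
      simp only [Finset.mem_coe, Finset.mem_filter, Finset.mem_range, hT] at hj ⊢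
      omega
  have eM : ((Finset.filter (fun j => 2*j = n) (Finset.filter (fun j => ¬ 2*j < n) P)).card : ℤ)
      = (if Even n ∧ n/2 ∈ X then 1 else 0) := by
    by_cases h : Even n ∧ n/2 ∈ X
    · rw [if_pos h]
      have : Finset.filter (fun j => 2*j = n) (Finset.filter (fun j => ¬ 2*j < n) P) = {n/2} := by
        ext j
        simp only [Finset.mem_filter, Finset.mem_range, hP, Finset.mem_singleton]
        constructor
        · rintro ⟨⟨⟨h1, h2, h3⟩, h4⟩, h5⟩
          omega
        · intro hj
          obtain ⟨he, hmem⟩ := h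
          obtain ⟨c, hc⟩ := he
          subst hj
          have hj2 : n / 2 = c := by omega
          refine ⟨⟨⟨by omega, hmem, ?_⟩, by omega⟩, by omega⟩
          rw [show n - n/2 = n/2 by omega]
          exact hmem
      rw [this]
      simp
    · rw [if_neg h]
      have : Finset.filter (fun j => 2*j = n) (Finset.filter (fun j => ¬ 2*j < n) P) = ∅ := by
        rw [Finset.filter_eq_empty_iff]
        intro j hj
        simp only [Finset.mem_filter, Finset.mem_range, hP] at hj
        obtain ⟨⟨h1, h2, h3⟩, h4⟩ := hj
        intro hc
        apply h
        constructor
        · exact ⟨j, by omega⟩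
        · rw [show n/2 = j by omega]
          exact h2
      rw [this]
      simp
  rw [hLHS, R_eq_card X n]
  have hTT : ((Finset.range (n+1)).filter (fun j => j ∈ X ∧ (n - j) ∈ X ∧ 2*j < n)) = T := rfl
  rw [hTT]
  have eT' : (Finset.filter (fun j => 2*j < n) P).card = T.card := by rw [eT]
  rw [← eM]
  omega

def Cs (l : ℕ) : Set ℕ := {n | gf l n = 1 ∨ n % ml l = rl l}
def Ds (l : ℕ) : Set ℕ := {n | gf l n = -1 ∨ n % ml l = rl l}

instance (l : ℕ) : DecidablePred (· ∈ Cs l) := fun n =>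
  inferInstanceAs (Decidable (gf l n = 1 ∨ n % ml l = rl l))
instance (l : ℕ) : DecidablePred (· ∈ Ds l) := fun n =>
  inferInstanceAs (Decidable (gf l n = -1 ∨ n % ml l = rl l))

lemma mem_Cs (l n : ℕ) : n ∈ Cs l ↔ (gf l n = 1 ∨ n % ml l = rl l) := Iff.rfl
lemma mem_Ds (l n : ℕ) : n ∈ Ds l ↔ (gf l n = -1 ∨ n % ml l = rl l) := Iff.rfl

lemma mod_iff (l n : ℕ) : n % ml l = rl l ↔ ∃ k : ℕ, n = rl l + k * ml l := by
  constructor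
  · intro h
    refine ⟨n / ml l, ?_⟩
    have hdm := Nat.div_add_mod n (ml l)
    have hc : n / ml l * ml l = ml l * (n / ml l) := Nat.mul_comm _ _
    omega
  · rintro ⟨k, rfl⟩
    rw [Nat.add_mul_mod_self_right, Nat.mod_eq_of_lt (rl_lt_ml l)]

lemma ind_sub (l : ℕ) (j : ℕ) :
    (if j ∈ Cs l then (1:ℤ) else 0) - (if j ∈ Ds l then 1 else 0) = gf l j := by
  by_cases hm : j % ml l = rl l
  · rw [if_pos (by rw [mem_Cs]; right; exact hm), if_pos (by rw [mem_Ds]; right; exact hm),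
      (gf_eq_zero_iff l j).mpr hm]
    ring
  · rcases gf_vals l j with h | h | h
    · exact absurd ((gf_eq_zero_iff l j).mp h) hm
    · have hnD : ¬ j ∈ Ds l := by
        rw [mem_Ds]
        push_neg
        exact ⟨by omega, hm⟩
      rw [if_pos (by rw [mem_Cs]; left; exact h), if_neg hnD, h]
      ring
    · have hnC : ¬ j ∈ Cs l := by
        rw [mem_Cs]
        push_neg
        exact ⟨by omega, hm⟩
      rw [if_neg hnC, if_pos (by rw [mem_Ds]; left; exact h), h]
      ring

lemma ind_add (l : ℕ) (j : ℕ) :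
    (if j ∈ Cs l then (1:ℤ) else 0) + (if j ∈ Ds l then 1 else 0) = hf l j := by
  rw [hf]
  by_cases hm : j % ml l = rl l
  · rw [if_pos (by rw [mem_Cs]; right; exact hm), if_pos (by rw [mem_Ds]; right; exact hm),
      if_pos hm]
  · rw [if_neg hm]
    rcases gf_vals l j with h | h | h
    · exact absurd ((gf_eq_zero_iff l j).mp h) hm
    · have hnD : ¬ j ∈ Ds l := by
        rw [mem_Ds]
        push_neg
        exact ⟨by omega, hm⟩
      rw [if_pos (by rw [mem_Cs]; left; exact h), if_neg hnD]
    · have hnC : ¬ j ∈ Cs l := by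
        rw [mem_Cs]
        push_neg
        exact ⟨by omega, hm⟩
      rw [if_neg hnC, if_pos (by rw [mem_Ds]; left; exact h)]
      ring

theorem chen_lev (l : ℕ) (hl : 0 < l) :
    ∃ C D : Set ℕ, C ∪ D = Set.univ ∧
      C ∩ D = {n : ℕ | ∃ k : ℕ, n = 2 ^ (2 * l) - 1 + k * (2 ^ (2 * l + 1) - 1)} ∧
      ∀ n : ℕ, 0 < n → R C n = R D n := by
  refine ⟨Cs l, Ds l, ?_, ?_, ?_⟩
  · ext n
    simp only [Set.mem_union, mem_Cs, mem_Ds, Set.mem_univ, iff_true]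
    rcases gf_vals l n with h | h | h
    · left; right; exact (gf_eq_zero_iff l n).mp h
    · left; left; exact h
    · right; left; exact h
  · ext n
    simp only [Set.mem_inter_iff, mem_Cs, mem_Ds, Set.mem_setOf_eq]
    constructor
    · rintro ⟨h1 | h1, h2 | h2⟩
      · rw [h1] at h2; norm_num at h2
      · exact (mod_iff l n).mp h2
      · exact (mod_iff l n).mp h1
      · exact (mod_iff l n).mp h1
    · intro h
      have hm : n % ml l = rl l := (mod_iff l n).mpr h
      exact ⟨Or.inr hm, Or.inr hm⟩
  · intro n _
    have h1 := sum_indicator_sq (Cs l) n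
    have h2 := sum_indicator_sq (Ds l) n
    have hgh : ∀ j ∈ Finset.range (n+1), gf l j * hf l (n - j)
        = (if j ∈ Cs l then (1:ℤ) else 0) * (if n - j ∈ Cs l then 1 else 0)
          + (if j ∈ Cs l then (1:ℤ) else 0) * (if n - j ∈ Ds l then 1 else 0)
          - (if j ∈ Ds l then (1:ℤ) else 0) * (if n - j ∈ Cs l then 1 else 0)
          - (if j ∈ Ds l then (1:ℤ) else 0) * (if n - j ∈ Ds l then 1 else 0) := by
      intro j _
      rw [← ind_sub l j, ← ind_add l (n - j)]
      ring
    have hrefl : ∑ j ∈ Finset.range (n+1),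
          (if j ∈ Cs l then (1:ℤ) else 0) * (if n - j ∈ Ds l then 1 else 0)
        = ∑ j ∈ Finset.range (n+1),
          (if j ∈ Ds l then (1:ℤ) else 0) * (if n - j ∈ Cs l then 1 else 0) := by
      rw [← Finset.sum_range_reflect
        (fun j => (if j ∈ Ds l then (1:ℤ) else 0) * (if n - j ∈ Cs l then 1 else 0)) (n+1)]
      apply Finset.sum_congr rfl
      intro j hj
      simp only [Finset.mem_range] at hj
      have e1 : n + 1 - 1 - j = n - j := by omega
      have e2 : n - (n - j) = j := by omega
      rw [e1, e2, mul_comm]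
    have Hbig : ∑ j ∈ Finset.range (n+1),
          (if j ∈ Cs l then (1:ℤ) else 0) * (if n - j ∈ Cs l then 1 else 0)
        - ∑ j ∈ Finset.range (n+1),
          (if j ∈ Ds l then (1:ℤ) else 0) * (if n - j ∈ Ds l then 1 else 0)
        = if Even n then gf l (n / 2) else 0 := by
      rw [← key l hl n, Finset.sum_congr rfl hgh]
      rw [Finset.sum_sub_distrib, Finset.sum_sub_distrib, Finset.sum_add_distrib, hrefl]
      ring
    have hdelta : (if Even n ∧ n/2 ∈ Cs l then (1:ℤ) else 0)
        - (if Even n ∧ n/2 ∈ Ds l then 1 else 0) = if Even n then gf l (n / 2) else 0 := by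
      by_cases he : Even n
      · simp only [he, true_and, if_pos he]
        exact ind_sub l (n / 2)
      · simp [he]
    have hfin : 2 * (R (Cs l) n : ℤ) = 2 * (R (Ds l) n : ℤ) := by linarith
    omega
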